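/- Let E be a finite set, S a Markov transition kernel on E with invariant probability measure ν, and for ξ ∈ E let P_ξ (with expectation E_ξ) denote the law of the canonical Markov chain (ξ_k)_{k≥0} with kernel S started at ξ. Let τ be a stopping time of the chain with 1 ≤ τ < ∞ P_ξ-a.s. for every ξ, and define the iterates τ₀ := 0 and τ_{m+1} := τ_m + τ∘Θ_{τ_m}, where Θ is the shift on path space. Let ρ ∈ (0,1) and suppose max_{ξ∈E} E_ξ[ρ^τ] ≤ 1/2. Then for every function g : E → [0,∞): (1−ρ)^{-1} ∫ g dν ≤ max_{ξ∈E} E_ξ[ ∑_{k=0}^∞ ρ^k g(ξ_k) ] ≤ 2 max_{ξ∈E} E_ξ[ ∑_{k=0}^{τ−1} g(ξ_k) ]. -/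

import Mathlib

open MeasureTheory

namespace ResolventBound

/-- The shift `Θ_k` on path space. -/
def shiftPath {E : Type*} (k : ℕ) (X : ℕ → E) : ℕ → E := fun n => X (n + k)

/-- The iterates `τ₀ = 0`, `τ_{m+1} = τ_m + τ ∘ Θ_{τ_m}` of a stopping time `τ`. -/
def tauIter {E : Type*} (τ : (ℕ → E) → ℕ) : ℕ → (ℕ → E) → ℕ
  | 0, _ => 0
  | m + 1, X => tauIter τ m X + τ (shiftPath (tauIter τ m X) X)

section Aux

variable {E : Type*} [Fintype E] [Nonempty E] [DecidableEq E]
  [MeasurableSpace E] [MeasurableSingletonClass E]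

/-- Weight of a finite path. -/
def wt (S : E → E → ℝ) (n : ℕ) (ξ : E) (xs : Fin (n + 1) → E) : ℝ :=
  (if xs 0 = ξ then 1 else 0) * ∏ i : Fin n, S (xs i.castSucc) (xs i.succ)

lemma wt_nonneg {S : E → E → ℝ} (hS0 : ∀ a b, 0 ≤ S a b) (n : ℕ) (ξ : E)
    (xs : Fin (n + 1) → E) : 0 ≤ wt S n ξ xs := by
  refine mul_nonneg ?_ (Finset.prod_nonneg fun i _ => hS0 _ _)
  split <;> norm_num

lemma wt_snoc (S : E → E → ℝ) (n : ℕ) (ξ : E) (xs : Fin (n + 1) → E) (b : E) :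
    wt S (n + 1) ξ (Fin.snoc xs b) = wt S n ξ xs * S (xs (Fin.last n)) b := by
  unfold wt
  rw [Fin.prod_univ_castSucc]
  have h0 : (Fin.snoc xs b : Fin (n + 2) → E) 0 = xs 0 := by
    rw [show (0 : Fin (n + 2)) = Fin.castSucc 0 by rfl, Fin.snoc_castSucc]
  have h1 : ∀ i : Fin n,
      S ((Fin.snoc xs b : Fin (n+2) → E) i.castSucc.castSucc)
        ((Fin.snoc xs b : Fin (n+2) → E) i.castSucc.succ)
      = S (xs i.castSucc) (xs i.succ) := by
    intro i
    rw [Fin.snoc_castSucc, Fin.succ_castSucc, Fin.snoc_castSucc]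
  have h2 : S ((Fin.snoc xs b : Fin (n+2) → E) (Fin.last n).castSucc)
      ((Fin.snoc xs b : Fin (n+2) → E) (Fin.last n).succ) = S (xs (Fin.last n)) b := by
    rw [Fin.snoc_castSucc, Fin.succ_last, Fin.snoc_last]
  rw [Finset.prod_congr rfl (fun i _ => h1 i), h2, h0]
  ring

lemma sum_snoc {n : ℕ} (f : (Fin (n + 1 + 1) → E) → ℝ) :
    ∑ xs : Fin (n + 1 + 1) → E, f xs
      = ∑ ys : Fin (n + 1) → E, ∑ b : E, f (Fin.snoc ys b) := by
  rw [← Equiv.sum_comp (Fin.snocEquiv (fun _ : Fin (n + 1 + 1) => E)) f]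
  rw [Fintype.sum_prod_type]
  exact Finset.sum_comm

/-- `pkA S j a h = E_a[h(X_j)]` as a finite sum. -/
def pkA (S : E → E → ℝ) (j : ℕ) (a : E) (h : E → ℝ) : ℝ :=
  ∑ xs : Fin (j + 1) → E, wt S j a xs * h (xs (Fin.last j))

lemma pkA_zero (S : E → E → ℝ) (a : E) (h : E → ℝ) : pkA S 0 a h = h a := by
  unfold pkA
  rw [← Equiv.sum_comp (Equiv.funUnique (Fin 1) E).symm
    (fun xs : Fin 1 → E => wt S 0 a xs * h (xs (Fin.last 0)))]
  simp [wt, Equiv.funUnique]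

lemma pkA_succ (S : E → E → ℝ) (j : ℕ) (a : E) (h : E → ℝ) :
    pkA S (j + 1) a h = pkA S j a (fun c => ∑ b, S c b * h b) := by
  unfold pkA
  rw [sum_snoc (fun xs => wt S (j + 1) a xs * h (xs (Fin.last (j + 1))))]
  refine Finset.sum_congr rfl fun ys _ => ?_
  rw [Finset.mul_sum]
  refine Finset.sum_congr rfl fun b _ => ?_
  rw [wt_snoc, Fin.snoc_last]
  ring

lemma pkA_nonneg {S : E → E → ℝ} (hS0 : ∀ a b, 0 ≤ S a b) (j : ℕ) (a : E)
    {h : E → ℝ} (hh : ∀ c, 0 ≤ h c) : 0 ≤ pkA S j a h :=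
  Finset.sum_nonneg fun xs _ => mul_nonneg (wt_nonneg hS0 _ _ _) (hh _)

/-- Invariance propagates through `pkA`. -/
lemma inv_iter (S : E → E → ℝ) (ν : E → ℝ)
    (hinv : ∀ g : E → ℝ, ∑ a, ν a * (∑ b, S a b * g b) = ∑ a, ν a * g a) :
    ∀ (j : ℕ) (h : E → ℝ), ∑ a, ν a * pkA S j a h = ∑ a, ν a * h a := by
  intro j
  induction j with
  | zero => intro h; simp [pkA_zero]
  | succ j ih =>
    intro h
    simp only [pkA_succ]
    rw [ih (fun c => ∑ b, S c b * h b), hinv h]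

/-- Markov-type algebraic identity for finite path sums. -/
lemma markovA (S : E → E → ℝ) (ξ : E) (j : ℕ) :
    ∀ (n : ℕ) (φ : (Fin (n + 1) → E) → ℝ) (h : E → ℝ),
    ∑ xs : Fin (n + j + 1) → E,
      wt S (n + j) ξ xs *
        (φ (fun i : Fin (n + 1) => xs (Fin.castLE (by omega) i)) * h (xs (Fin.last (n + j))))
    = ∑ a : E,
        (∑ ys : Fin (n + 1) → E,
          wt S n ξ ys * (φ ys * (if ys (Fin.last n) = a then 1 else 0))) * pkA S j a h := by
  induction j with
  | zero =>
    intro n φ h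
    show (∑ xs : Fin (n + 1) → E, wt S n ξ xs * (φ xs * h (xs (Fin.last n))))
      = ∑ a : E, (∑ ys : Fin (n + 1) → E,
          wt S n ξ ys * (φ ys * if ys (Fin.last n) = a then 1 else 0)) * pkA S 0 a h
    simp only [pkA_zero, Finset.sum_mul]
    rw [Finset.sum_comm]
    refine Finset.sum_congr rfl fun xs _ => Eq.symm ?_
    calc ∑ a : E, wt S n ξ xs * (φ xs * if xs (Fin.last n) = a then 1 else 0) * h a
        = ∑ a : E, if xs (Fin.last n) = a then wt S n ξ xs * (φ xs * h a) else 0 :=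
          Finset.sum_congr rfl fun a _ => by
            by_cases hx : xs (Fin.last n) = a <;> simp [hx, mul_assoc]
      _ = wt S n ξ xs * (φ xs * h (xs (Fin.last n))) := by rw [Finset.sum_ite_eq]; simp
  | succ j ih =>
    intro n φ h
    have key : ∀ (ys : Fin (n + j + 1) → E) (b : E) (i : Fin (n + 1)),
        (Fin.snoc ys b : Fin (n + j + 1 + 1) → E) (Fin.castLE (by omega) i)
          = ys (Fin.castLE (by omega) i) := by
      intro ys b i
      rw [show (Fin.castLE (by omega) i : Fin (n + j + 1 + 1))
          = Fin.castSucc (Fin.castLE (by omega) i) from Fin.ext rfl]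
      exact Fin.snoc_castSucc _ _ _
    show (∑ xs : Fin (n + j + 1 + 1) → E,
        wt S (n + j + 1) ξ xs *
          (φ (fun i : Fin (n + 1) => xs (Fin.castLE (by omega) i)) *
            h (xs (Fin.last (n + j + 1)))))
      = ∑ a : E, (∑ ys : Fin (n + 1) → E,
          wt S n ξ ys * (φ ys * if ys (Fin.last n) = a then 1 else 0)) * pkA S (j + 1) a h
    calc
      (∑ xs : Fin (n + j + 1 + 1) → E,
          wt S (n + j + 1) ξ xs *
            (φ (fun i : Fin (n + 1) => xs (Fin.castLE (by omega) i)) *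
              h (xs (Fin.last (n + j + 1)))))
        = ∑ ys : Fin (n + j + 1) → E,
            wt S (n + j) ξ ys *
              (φ (fun i : Fin (n + 1) => ys (Fin.castLE (by omega) i)) *
                ∑ b, S (ys (Fin.last (n + j))) b * h b) := by
          rw [sum_snoc (n := n + j) (fun xs : Fin (n + j + 1 + 1) → E => wt S (n + j + 1) ξ xs *
            (φ (fun i : Fin (n + 1) => xs (Fin.castLE (by omega) i)) *
              h (xs (Fin.last (n + j + 1)))))]
          refine Finset.sum_congr rfl fun ys _ => ?_
          simp only [Finset.mul_sum]
          refine Finset.sum_congr rfl fun b _ => ?_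
          rw [wt_snoc, Fin.snoc_last]
          have e3 : φ (fun i : Fin (n + 1) =>
              (Fin.snoc ys b : Fin (n + j + 1 + 1) → E) (Fin.castLE (by omega) i))
              = φ (fun i : Fin (n + 1) => ys (Fin.castLE (by omega) i)) :=
            congrArg φ (funext fun i => key ys b i)
          rw [e3]
          ring
      _ = ∑ a : E,
          (∑ ys : Fin (n + 1) → E,
            wt S n ξ ys * (φ ys * (if ys (Fin.last n) = a then 1 else 0)))
              * pkA S j a (fun c => ∑ b, S c b * h b) := ih n φ (fun c => ∑ b, S c b * h b)
      _ = _ := by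
        refine Finset.sum_congr rfl fun a _ => ?_
        rw [pkA_succ]

end Aux

section Int

variable {E : Type*} [Fintype E] [Nonempty E] [DecidableEq E]
  [MeasurableSpace E] [MeasurableSingletonClass E]

/-- Integral of a function of finitely many coordinates. -/
lemma integral_cyl (S : E → E → ℝ) (hS0 : ∀ a b, 0 ≤ S a b)
    (P : E → Measure (ℕ → E)) (hP : ∀ ξ, IsProbabilityMeasure (P ξ))
    (hPcyl : ∀ (ξ : E) (m : ℕ) (xs : Fin (m + 1) → E),
      P ξ {X | ∀ i : Fin (m + 1), X (i : ℕ) = xs i} =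
        ENNReal.ofReal ((if xs 0 = ξ then 1 else 0) *
          ∏ i : Fin m, S (xs i.castSucc) (xs i.succ)))
    (ξ : E) (m : ℕ) (f : (Fin (m + 1) → E) → ℝ) :
    ∫ X, f (fun i : Fin (m + 1) => X (i : ℕ)) ∂P ξ = ∑ xs, wt S m ξ xs * f xs := by
  haveI := hP ξ
  set R : (ℕ → E) → Fin (m + 1) → E := fun X i => X (i : ℕ) with hRdef
  have hRm : Measurable R := measurable_pi_lambda _ fun i => measurable_pi_apply _
  have h1 : ∫ X, f (R X) ∂P ξ = ∫ y, f y ∂((P ξ).map R) :=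
    (integral_map hRm.aemeasurable (measurable_of_finite f).aestronglyMeasurable).symm
  haveI : IsProbabilityMeasure ((P ξ).map R) := Measure.isProbabilityMeasure_map hRm.aemeasurable
  rw [h1, integral_fintype .of_finite]
  refine Finset.sum_congr rfl fun xs _ => ?_
  have h2 : R ⁻¹' {xs} = {X | ∀ i : Fin (m + 1), X (i : ℕ) = xs i} := by
    ext X
    simp [hRdef, funext_iff]
  rw [measureReal_def, Measure.map_apply hRm (measurableSet_singleton xs), h2, hPcyl ξ m xs]
  rw [show ENNReal.ofReal ((if xs 0 = ξ then (1:ℝ) else 0) *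
      ∏ i : Fin m, S (xs i.castSucc) (xs i.succ)) = ENNReal.ofReal (wt S m ξ xs) from rfl]
  rw [ENNReal.toReal_ofReal (wt_nonneg hS0 m ξ xs), smul_eq_mul]

lemma pk_eq (S : E → E → ℝ) (hS0 : ∀ a b, 0 ≤ S a b)
    (P : E → Measure (ℕ → E)) (hP : ∀ ξ, IsProbabilityMeasure (P ξ))
    (hPcyl : ∀ (ξ : E) (m : ℕ) (xs : Fin (m + 1) → E),
      P ξ {X | ∀ i : Fin (m + 1), X (i : ℕ) = xs i} =
        ENNReal.ofReal ((if xs 0 = ξ then 1 else 0) *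
          ∏ i : Fin m, S (xs i.castSucc) (xs i.succ)))
    (g : E → ℝ) (a : E) (j : ℕ) :
    ∫ X, g (X j) ∂P a = pkA S j a g :=
  integral_cyl S hS0 P hP hPcyl a j (fun xs => g (xs (Fin.last j)))

/-- The Markov property for a function of the first `n+1` coordinates. -/
lemma markov_int (S : E → E → ℝ) (hS0 : ∀ a b, 0 ≤ S a b)
    (P : E → Measure (ℕ → E)) (hP : ∀ ξ, IsProbabilityMeasure (P ξ))
    (hPcyl : ∀ (ξ : E) (m : ℕ) (xs : Fin (m + 1) → E),
      P ξ {X | ∀ i : Fin (m + 1), X (i : ℕ) = xs i} =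
        ENNReal.ofReal ((if xs 0 = ξ then 1 else 0) *
          ∏ i : Fin m, S (xs i.castSucc) (xs i.succ)))
    (g : E → ℝ) (ξ : E) (n j : ℕ) (φ : (Fin (n + 1) → E) → ℝ) :
    ∫ X, φ (fun i : Fin (n + 1) => X (i : ℕ)) * g (X (n + j)) ∂P ξ
      = ∑ a, (∑ ys : Fin (n + 1) → E,
          wt S n ξ ys * (φ ys * (if ys (Fin.last n) = a then 1 else 0)))
            * ∫ X, g (X j) ∂P a := by
  have h1 := integral_cyl S hS0 P hP hPcyl ξ (n + j)
    (fun xs => φ (fun i : Fin (n + 1) => xs (Fin.castLE (by omega) i)) * g (xs (Fin.last (n + j))))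
  refine Eq.trans (Eq.trans h1 (markovA S ξ j n φ g)) ?_
  refine Finset.sum_congr rfl fun a _ => ?_
  rw [pk_eq S hS0 P hP hPcyl g a j]

end Int

theorem resolvent_invariant_bound
    {E : Type*} [Fintype E] [Nonempty E] [DecidableEq E]
    [MeasurableSpace E] [MeasurableSingletonClass E]
    (S : E → E → ℝ) (hS0 : ∀ a b, 0 ≤ S a b) (hS1 : ∀ a, ∑ b, S a b = 1)
    (ν : E → ℝ) (hν0 : ∀ a, 0 ≤ ν a) (hν1 : ∑ a, ν a = 1)
    (hinv : ∀ g : E → ℝ, ∑ a, ν a * (∑ b, S a b * g b) = ∑ a, ν a * g a)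
    (P : E → Measure (ℕ → E)) (hP : ∀ ξ, IsProbabilityMeasure (P ξ))
    (hPcyl : ∀ (ξ : E) (m : ℕ) (xs : Fin (m + 1) → E),
      P ξ {X | ∀ i : Fin (m + 1), X (i : ℕ) = xs i} =
        ENNReal.ofReal ((if xs 0 = ξ then 1 else 0) *
          ∏ i : Fin m, S (xs i.castSucc) (xs i.succ)))
    (τ : (ℕ → E) → ℕ)
    (hstop : ∀ (X Y : ℕ → E) (n : ℕ), τ X = n → (∀ i ≤ n, X i = Y i) → τ Y = n)
    (hτ1 : ∀ ξ, ∀ᵐ X ∂P ξ, 1 ≤ τ X)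
    (ρ : ℝ) (hρ : ρ ∈ Set.Ioo (0 : ℝ) 1)
    (hhalf : ∀ ξ, ∫ X, ρ ^ τ X ∂P ξ ≤ 1 / 2)
    (g : E → ℝ) (hg : ∀ a, 0 ≤ g a) :
    (1 - ρ)⁻¹ * ∑ a, ν a * g a ≤
      (Finset.univ.sup' Finset.univ_nonempty fun ξ =>
        ∫ X, ∑' k : ℕ, ρ ^ k * g (X k) ∂P ξ) ∧
    (Finset.univ.sup' Finset.univ_nonempty fun ξ =>
        ∫ X, ∑' k : ℕ, ρ ^ k * g (X k) ∂P ξ) ≤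
      2 * Finset.univ.sup' Finset.univ_nonempty fun ξ =>
        ∫ X, ∑ k ∈ Finset.range (τ X), g (X k) ∂P ξ := by
  obtain ⟨hρ0, hρ1⟩ := hρ
  classical
  set Gf : E → ℝ := fun ξ => ∫ X, ∑' k : ℕ, ρ ^ k * g (X k) ∂P ξ with hGfdef
  set Ff : E → ℝ := fun ξ => ∫ X, ∑ k ∈ Finset.range (τ X), g (X k) ∂P ξ with hFfdef
  set MG := Finset.univ.sup' Finset.univ_nonempty Gf with hMGdef
  set MF := Finset.univ.sup' Finset.univ_nonempty Ff with hMFdef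
  have hmg : Measurable g := measurable_of_finite g
  have hmk : ∀ k : ℕ, Measurable fun X : ℕ → E => g (X k) :=
    fun k => hmg.comp (measurable_pi_apply k)
  set Cg := Finset.univ.sup' Finset.univ_nonempty g with hCgdef
  have hCg : ∀ a, g a ≤ Cg := fun a => Finset.le_sup' g (Finset.mem_univ a)
  have hCg0 : 0 ≤ Cg := le_trans (hg (Classical.arbitrary E)) (hCg _)
  have hgeo : Summable fun k : ℕ => ρ ^ k := summable_geometric_of_lt_one hρ0.le hρ1
  have hsum_of_le : ∀ x : ℕ → ℝ, (∀ k, 0 ≤ x k) → (∀ k, x k ≤ Cg) →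
      Summable (fun k => ρ ^ k * x k) := by
    intro x h0 h1
    exact Summable.of_nonneg_of_le (fun k => mul_nonneg (pow_nonneg hρ0.le k) (h0 k))
      (fun k => mul_le_mul_of_nonneg_left (h1 k) (pow_nonneg hρ0.le k)) (hgeo.mul_right Cg)
  have hsumX : ∀ X : ℕ → E, Summable fun k => ρ ^ k * g (X k) :=
    fun X => hsum_of_le _ (fun k => hg _) (fun k => hCg _)
  have hintb : ∀ (ξ : E) (h : (ℕ → E) → ℝ) (C : ℝ), Measurable h → (∀ X, |h X| ≤ C) →
      Integrable h (P ξ) := by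
    intro ξ h C hm hb
    haveI := hP ξ
    exact ⟨hm.aestronglyMeasurable,
      HasFiniteIntegral.of_bounded (C := C) (Filter.Eventually.of_forall fun X => by
        simpa [Real.norm_eq_abs] using hb X)⟩
  have hlint : ∀ (ξ : E) (f : ℕ → (ℕ → E) → ℝ) (C : ℕ → ℝ), (∀ j, 0 ≤ C j) →
      (∀ j X, |f j X| ≤ C j) → Summable C →
      (∑' j : ℕ, ∫⁻ X, ‖f j X‖₊ ∂P ξ) ≠ ⊤ := by
    intro ξ f C hC0 hb hs
    haveI := hP ξ
    have h1 : ∀ j, ∫⁻ X, ‖f j X‖₊ ∂P ξ ≤ ENNReal.ofReal (C j) := by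
      intro j
      have h2 : ∀ X, (‖f j X‖₊ : ENNReal) ≤ ENNReal.ofReal (C j) := by
        intro X
        rw [← ENNReal.ofReal_coe_nnreal, coe_nnnorm]
        exact ENNReal.ofReal_le_ofReal (by simpa [Real.norm_eq_abs] using hb j X)
      calc ∫⁻ X, ‖f j X‖₊ ∂P ξ ≤ ∫⁻ _, ENNReal.ofReal (C j) ∂P ξ := lintegral_mono h2
        _ = ENNReal.ofReal (C j) := by simp
    have h2 : (∑' j : ℕ, ∫⁻ X, ‖f j X‖₊ ∂P ξ) ≤ ENNReal.ofReal (∑' j, C j) := by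
      rw [ENNReal.ofReal_tsum_of_nonneg hC0 hs]
      exact ENNReal.tsum_le_tsum h1
    exact ne_top_of_le_ne_top ENNReal.ofReal_ne_top h2
  have hpkeq : ∀ (j : ℕ) (a : E), (∫ X, g (X j) ∂P a) = pkA S j a g :=
    fun j a => pk_eq S hS0 P hP hPcyl g a j
  have hpk0 : ∀ (j : ℕ) (a : E), 0 ≤ ∫ X, g (X j) ∂P a :=
    fun j a => integral_nonneg fun X => hg _
  have hpkC : ∀ (j : ℕ) (a : E), (∫ X, g (X j) ∂P a) ≤ Cg := by
    intro j a
    haveI := hP a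
    calc ∫ X, g (X j) ∂P a ≤ ∫ _, Cg ∂P a :=
          integral_mono (hintb a _ Cg (hmk j)
            (fun X => by rw [abs_of_nonneg (hg _)]; exact hCg _))
            (integrable_const Cg) (fun X => hCg _)
      _ = Cg := by simp
  have hGm : ∀ k : ℕ, Measurable fun X : ℕ → E => ρ ^ k * g (X k) :=
    fun k => (hmk k).const_mul _
  have hG : ∀ ξ : E, Gf ξ = ∑' k : ℕ, ρ ^ k * ∫ X, g (X k) ∂P ξ := by
    intro ξ
    haveI := hP ξ
    show (∫ X, ∑' k : ℕ, ρ ^ k * g (X k) ∂P ξ) = _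
    rw [integral_tsum (fun k => (hGm k).aestronglyMeasurable)
      (hlint ξ _ (fun k => ρ ^ k * Cg)
        (fun k => mul_nonneg (pow_nonneg hρ0.le k) hCg0)
        (fun k X => by
          rw [abs_of_nonneg (mul_nonneg (pow_nonneg hρ0.le k) (hg _))]
          exact mul_le_mul_of_nonneg_left (hCg _) (pow_nonneg hρ0.le k))
        (hgeo.mul_right Cg))]
    exact tsum_congr fun k => integral_const_mul _ _
  have hG0 : ∀ ξ, 0 ≤ Gf ξ := fun ξ => by
    rw [hG ξ]
    exact tsum_nonneg fun k => mul_nonneg (pow_nonneg hρ0.le k) (hpk0 k ξ)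
  have hGle : ∀ a : E, Gf a ≤ MG := fun a => Finset.le_sup' Gf (Finset.mem_univ a)
  have hMG0 : 0 ≤ MG := le_trans (hG0 (Classical.arbitrary E)) (hGle _)
  have hsum_pk : ∀ a : E, Summable fun k => ρ ^ k * ∫ X, g (X k) ∂P a :=
    fun a => hsum_of_le _ (hpk0 · a) (hpkC · a)
  have first : (1 - ρ)⁻¹ * ∑ a, ν a * g a ≤ MG := by
    have key : ∑ a, ν a * Gf a = (1 - ρ)⁻¹ * ∑ a, ν a * g a := by
      calc ∑ a, ν a * Gf a
          = ∑ a, ∑' k : ℕ, ν a * (ρ ^ k * ∫ X, g (X k) ∂P a) := by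
            refine Finset.sum_congr rfl fun a _ => ?_
            rw [hG a, tsum_mul_left]
        _ = ∑' k : ℕ, ∑ a, ν a * (ρ ^ k * ∫ X, g (X k) ∂P a) :=
            (Summable.tsum_finsetSum fun a _ => (hsum_pk a).mul_left (ν a)).symm
        _ = ∑' k : ℕ, ρ ^ k * ∑ a, ν a * ∫ X, g (X k) ∂P a := by
            refine tsum_congr fun k => ?_
            rw [Finset.mul_sum]
            exact Finset.sum_congr rfl fun a _ => by ring
        _ = ∑' k : ℕ, ρ ^ k * ∑ a, ν a * g a := by
            refine tsum_congr fun k => ?_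
            congr 1
            calc ∑ a, ν a * ∫ X, g (X k) ∂P a = ∑ a, ν a * pkA S k a g :=
                  Finset.sum_congr rfl fun a _ => by rw [hpkeq]
              _ = ∑ a, ν a * g a := inv_iter S ν hinv k g
        _ = (∑' k : ℕ, ρ ^ k) * ∑ a, ν a * g a := tsum_mul_right
        _ = (1 - ρ)⁻¹ * ∑ a, ν a * g a := by rw [tsum_geometric_of_lt_one hρ0.le hρ1]
    calc (1 - ρ)⁻¹ * ∑ a, ν a * g a = ∑ a, ν a * Gf a := key.symm
      _ ≤ ∑ a, ν a * MG := Finset.sum_le_sum fun a _ =>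
          mul_le_mul_of_nonneg_left (hGle a) (hν0 a)
      _ = MG := by rw [← Finset.sum_mul, hν1, one_mul]
  -- second inequality
  have hτiff : ∀ (n : ℕ) (X : ℕ → E), τ X = n ↔ τ (fun i : ℕ => X (min i n)) = n := by
    intro n X
    constructor
    · intro h
      exact hstop X _ n h fun i hi => by rw [min_eq_left hi]
    · intro h
      exact hstop _ X n h fun i hi => by rw [min_eq_left hi]
  set φτ : (n : ℕ) → (Fin (n + 1) → E) → ℝ := fun n xs =>
    if τ (fun i : ℕ => xs ⟨min i n, Nat.lt_succ_of_le (min_le_right i n)⟩) = n then 1 else 0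
    with hφτdef
  have hind : ∀ (n : ℕ) (X : ℕ → E),
      (if τ X = n then (1:ℝ) else 0) = φτ n (fun i : Fin (n + 1) => X (i : ℕ)) := by
    intro n X
    exact if_congr (hτiff n X) rfl rfl
  have hmind : ∀ n : ℕ, Measurable fun X : ℕ → E => if τ X = n then (1:ℝ) else 0 := by
    intro n
    rw [show (fun X : ℕ → E => if τ X = n then (1:ℝ) else 0)
        = (fun xs : Fin (n + 1) → E => φτ n xs) ∘ (fun X (i : Fin (n + 1)) => X (i : ℕ)) from
      funext fun X => hind n X]
    exact (measurable_of_finite _).comp (measurable_pi_lambda _ fun i => measurable_pi_apply _)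
  obtain ⟨N, hN⟩ : ∃ N : ℕ, ∀ X : ℕ → E, τ X ≤ N := by
    letI : TopologicalSpace E := ⊥
    haveI : DiscreteTopology E := ⟨rfl⟩
    have hopen : ∀ n : ℕ, IsOpen {X : ℕ → E | τ X = n} := by
      intro n
      have h1 : {X : ℕ → E | τ X = n}
          = (fun (X : ℕ → E) (i : Fin (n + 1)) => X (i : ℕ)) ⁻¹'
            {xs : Fin (n + 1) → E |
              τ (fun i : ℕ => xs ⟨min i n, Nat.lt_succ_of_le (min_le_right i n)⟩) = n} := by
        ext X
        simp only [Set.mem_setOf_eq, Set.mem_preimage]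
        exact hτiff n X
      rw [h1]
      exact (isOpen_discrete _).preimage (continuous_pi fun i => continuous_apply _)
    have hcov : (Set.univ : Set (ℕ → E)) ⊆ ⋃ n : ℕ, {X : ℕ → E | τ X = n} :=
      fun X _ => Set.mem_iUnion.mpr ⟨τ X, rfl⟩
    obtain ⟨t, ht⟩ := isCompact_univ.elim_finite_subcover _ hopen hcov
    refine ⟨t.sup id, fun X => ?_⟩
    obtain ⟨n, hn1, hn2⟩ := Set.mem_iUnion₂.mp (ht (Set.mem_univ X))
    have hn3 : τ X = n := hn2
    exact hn3 ▸ Finset.le_sup (f := id) hn1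
  obtain ⟨ξ0, -, hξ0⟩ := Finset.exists_mem_eq_sup' (Finset.univ_nonempty (α := E)) Gf
  haveI := hP ξ0
  have hMGeq : MG = Gf ξ0 := hξ0
  have hsum_tail : ∀ (n : ℕ) (X : ℕ → E), Summable fun j : ℕ => ρ ^ (n + j) * g (X (n + j)) := by
    intro n X
    refine Summable.of_nonneg_of_le (fun j => mul_nonneg (pow_nonneg hρ0.le _) (hg _))
      (fun j => ?_) (hgeo.mul_right Cg)
    exact mul_le_mul (pow_le_pow_of_le_one hρ0.le hρ1.le (Nat.le_add_left j n)) (hCg _)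
      (hg _) (pow_nonneg hρ0.le _)
  have htail0 : ∀ (n : ℕ) (X : ℕ → E), 0 ≤ ∑' j : ℕ, ρ ^ (n + j) * g (X (n + j)) :=
    fun n X => tsum_nonneg fun j => mul_nonneg (pow_nonneg hρ0.le _) (hg _)
  have htailB : ∀ (n : ℕ) (X : ℕ → E),
      (∑' j : ℕ, ρ ^ (n + j) * g (X (n + j))) ≤ (1 - ρ)⁻¹ * Cg := by
    intro n X
    calc (∑' j : ℕ, ρ ^ (n + j) * g (X (n + j))) ≤ ∑' j : ℕ, ρ ^ j * Cg := by
          refine Summable.tsum_le_tsum (fun j => ?_) (hsum_tail n X) (hgeo.mul_right Cg)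
          exact mul_le_mul (pow_le_pow_of_le_one hρ0.le hρ1.le (Nat.le_add_left j n)) (hCg _)
            (hg _) (pow_nonneg hρ0.le _)
      _ = (∑' j : ℕ, ρ ^ j) * Cg := tsum_mul_right
      _ = (1 - ρ)⁻¹ * Cg := by rw [tsum_geometric_of_lt_one hρ0.le hρ1]
  have htail_meas : ∀ n : ℕ, Measurable fun X : ℕ → E => ∑' j : ℕ, ρ ^ (n + j) * g (X (n + j)) := by
    intro n
    refine measurable_of_tendsto_metrizable' Filter.atTop
      (f := fun m : ℕ => fun X : ℕ → E => ∑ j ∈ Finset.range m, ρ ^ (n + j) * g (X (n + j)))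
      (fun m => Finset.measurable_sum _ fun j _ => (hmk (n + j)).const_mul _) ?_
    rw [tendsto_pi_nhds]
    intro X
    exact (hsum_tail n X).hasSum.tendsto_sum_nat
  have hind01 : ∀ (n : ℕ) (X : ℕ → E), |if τ X = n then (1:ℝ) else 0| ≤ 1 := by
    intro n X; split <;> norm_num
  have hind0 : ∀ (n : ℕ) (X : ℕ → E), 0 ≤ if τ X = n then (1:ℝ) else 0 := by
    intro n X; split <;> norm_num
  have hintA : ∀ n : ℕ, Integrable
      (fun X => (if τ X = n then (1:ℝ) else 0) * ∑ k ∈ Finset.range n, ρ ^ k * g (X k)) (P ξ0) := by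
    intro n
    refine hintb ξ0 _ (1 * (n * Cg))
      ((hmind n).mul (Finset.measurable_sum _ fun k _ => (hmk k).const_mul _)) fun X => ?_
    rw [abs_mul]
    refine mul_le_mul (hind01 n X) ?_ (abs_nonneg _) one_pos.le
    calc |∑ k ∈ Finset.range n, ρ ^ k * g (X k)|
        ≤ ∑ k ∈ Finset.range n, |ρ ^ k * g (X k)| := Finset.abs_sum_le_sum_abs _ _
      _ ≤ ∑ _k ∈ Finset.range n, Cg := by
          refine Finset.sum_le_sum fun k _ => ?_
          rw [abs_of_nonneg (mul_nonneg (pow_nonneg hρ0.le k) (hg _))]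
          calc ρ ^ k * g (X k) ≤ 1 * Cg :=
                mul_le_mul (pow_le_one₀ hρ0.le hρ1.le) (hCg _) (hg _) one_pos.le
            _ = Cg := one_mul _
      _ = n * Cg := by rw [Finset.sum_const, Finset.card_range, nsmul_eq_mul]
  have hintA' : ∀ n : ℕ, Integrable
      (fun X => (if τ X = n then (1:ℝ) else 0) * ∑ k ∈ Finset.range n, g (X k)) (P ξ0) := by
    intro n
    refine hintb ξ0 _ (1 * (n * Cg))
      ((hmind n).mul (Finset.measurable_sum _ fun k _ => hmk k)) fun X => ?_
    rw [abs_mul]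
    refine mul_le_mul (hind01 n X) ?_ (abs_nonneg _) one_pos.le
    calc |∑ k ∈ Finset.range n, g (X k)|
        ≤ ∑ k ∈ Finset.range n, |g (X k)| := Finset.abs_sum_le_sum_abs _ _
      _ ≤ ∑ _k ∈ Finset.range n, Cg := by
          refine Finset.sum_le_sum fun k _ => ?_
          rw [abs_of_nonneg (hg _)]
          exact hCg _
      _ = n * Cg := by rw [Finset.sum_const, Finset.card_range, nsmul_eq_mul]
  have hintB : ∀ n : ℕ, Integrable
      (fun X => (if τ X = n then (1:ℝ) else 0) * ∑' j : ℕ, ρ ^ (n + j) * g (X (n + j)))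
      (P ξ0) := by
    intro n
    refine hintb ξ0 _ (1 * ((1 - ρ)⁻¹ * Cg)) ((hmind n).mul (htail_meas n)) fun X => ?_
    rw [abs_mul]
    refine mul_le_mul (hind01 n X) ?_ (abs_nonneg _) one_pos.le
    rw [abs_of_nonneg (htail0 n X)]
    exact htailB n X
  -- pointwise decomposition
  have hdecomp : ∀ X : ℕ → E, (∑' k : ℕ, ρ ^ k * g (X k))
      = ∑ n ∈ Finset.range (N + 1),
          ((if τ X = n then (1:ℝ) else 0) * ∑ k ∈ Finset.range n, ρ ^ k * g (X k)
            + (if τ X = n then (1:ℝ) else 0) * ∑' j : ℕ, ρ ^ (n + j) * g (X (n + j))) := by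
    intro X
    refine Eq.symm ?_
    rw [Finset.sum_eq_single (τ X)
      (fun b _ hb => by rw [if_neg fun h => hb h.symm]; ring)
      (fun h => absurd (Finset.mem_range.mpr (Nat.lt_succ_of_le (hN X))) h)]
    rw [if_pos rfl, one_mul, one_mul, ← Summable.sum_add_tsum_nat_add (τ X) (hsumX X)]
    congr 1
    exact tsum_congr fun j => by rw [Nat.add_comm (τ X) j]
  -- the core Markov estimate
  have core : ∀ n : ℕ,
      (∫ X, (if τ X = n then (1:ℝ) else 0) * ∑' j : ℕ, ρ ^ (n + j) * g (X (n + j)) ∂P ξ0)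
        ≤ (∫ X, (if τ X = n then (1:ℝ) else 0) * ρ ^ n ∂P ξ0) * MG := by
    intro n
    have m1 : ∀ j : ℕ, Measurable fun X : ℕ → E =>
        (if τ X = n then (1:ℝ) else 0) * (ρ ^ (n + j) * g (X (n + j))) :=
      fun j => (hmind n).mul ((hmk (n + j)).const_mul _)
    have s1 : Summable fun j : ℕ => ρ ^ (n + j) * Cg := by
      refine Summable.of_nonneg_of_le
        (fun j => mul_nonneg (pow_nonneg hρ0.le _) hCg0) (fun j => ?_) (hgeo.mul_right Cg)
      exact mul_le_mul_of_nonneg_right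
        (pow_le_pow_of_le_one hρ0.le hρ1.le (Nat.le_add_left j n)) hCg0
    have b1 : ∀ (j : ℕ) (X : ℕ → E),
        |(if τ X = n then (1:ℝ) else 0) * (ρ ^ (n + j) * g (X (n + j)))| ≤ ρ ^ (n + j) * Cg := by
      intro j X
      rw [abs_mul]
      calc |if τ X = n then (1:ℝ) else 0| * |ρ ^ (n + j) * g (X (n + j))|
          ≤ 1 * (ρ ^ (n + j) * Cg) := by
            refine mul_le_mul (hind01 n X) ?_ (abs_nonneg _) one_pos.le
            rw [abs_of_nonneg (mul_nonneg (pow_nonneg hρ0.le _) (hg _))]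
            exact mul_le_mul_of_nonneg_left (hCg _) (pow_nonneg hρ0.le _)
        _ = ρ ^ (n + j) * Cg := one_mul _
    have e1 : (∫ X, (if τ X = n then (1:ℝ) else 0) * ∑' j : ℕ, ρ ^ (n + j) * g (X (n + j)) ∂P ξ0)
        = ∑' j : ℕ, ∫ X, (if τ X = n then (1:ℝ) else 0) * (ρ ^ (n + j) * g (X (n + j))) ∂P ξ0 := by
      rw [show (fun X : ℕ → E =>
          (if τ X = n then (1:ℝ) else 0) * ∑' j : ℕ, ρ ^ (n + j) * g (X (n + j)))
          = fun X : ℕ → E =>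
            ∑' j : ℕ, (if τ X = n then (1:ℝ) else 0) * (ρ ^ (n + j) * g (X (n + j))) from
        funext fun X => tsum_mul_left.symm]
      exact integral_tsum (fun j => (m1 j).aestronglyMeasurable)
        (hlint ξ0 _ (fun j => ρ ^ (n + j) * Cg)
          (fun j => mul_nonneg (pow_nonneg hρ0.le _) hCg0) b1 s1)
    have e2 : ∀ j : ℕ,
        (∫ X, (if τ X = n then (1:ℝ) else 0) * (ρ ^ (n + j) * g (X (n + j))) ∂P ξ0)
          = ρ ^ (n + j) * ∑ a, (∑ ys : Fin (n + 1) → E,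
              wt S n ξ0 ys * (φτ n ys * if ys (Fin.last n) = a then 1 else 0))
                * ∫ X, g (X j) ∂P a := by
      intro j
      rw [show (fun X : ℕ → E =>
          (if τ X = n then (1:ℝ) else 0) * (ρ ^ (n + j) * g (X (n + j))))
          = fun X : ℕ → E =>
            ρ ^ (n + j) * (φτ n (fun i : Fin (n + 1) => X (i : ℕ)) * g (X (n + j))) from
        funext fun X => by rw [← hind n X]; ring]
      rw [integral_const_mul]
      congr 1
      exact markov_int S hS0 P hP hPcyl g ξ0 n j (φτ n)
    have hqe : (∑ a, ∑ ys : Fin (n + 1) → E,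
        wt S n ξ0 ys * (φτ n ys * if ys (Fin.last n) = a then 1 else 0))
          = ∫ X, (if τ X = n then (1:ℝ) else 0) ∂P ξ0 := by
      rw [show (fun X : ℕ → E => if τ X = n then (1:ℝ) else 0)
          = fun X : ℕ → E => φτ n (fun i : Fin (n + 1) => X (i : ℕ)) from
        funext fun X => hind n X]
      rw [integral_cyl S hS0 P hP hPcyl ξ0 n (φτ n)]
      rw [Finset.sum_comm]
      refine Finset.sum_congr rfl fun ys _ => ?_
      calc ∑ a, wt S n ξ0 ys * (φτ n ys * if ys (Fin.last n) = a then 1 else 0)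
          = ∑ a, if ys (Fin.last n) = a then wt S n ξ0 ys * φτ n ys else 0 :=
            Finset.sum_congr rfl fun a _ => by
              by_cases hx : ys (Fin.last n) = a <;> simp [hx]
        _ = wt S n ξ0 ys * φτ n ys := by rw [Finset.sum_ite_eq]; simp
    have hc0 : ∀ a : E, 0 ≤ ∑ ys : Fin (n + 1) → E,
        wt S n ξ0 ys * (φτ n ys * if ys (Fin.last n) = a then 1 else 0) := by
      intro a
      refine Finset.sum_nonneg fun ys _ => mul_nonneg (wt_nonneg hS0 _ _ _) (mul_nonneg ?_ ?_)
      · simp only [hφτdef]; split <;> norm_num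
      · split <;> norm_num
    calc (∫ X, (if τ X = n then (1:ℝ) else 0) * ∑' j : ℕ, ρ ^ (n + j) * g (X (n + j)) ∂P ξ0)
        = ∑' j : ℕ, ρ ^ (n + j) * ∑ a, (∑ ys : Fin (n + 1) → E,
            wt S n ξ0 ys * (φτ n ys * if ys (Fin.last n) = a then 1 else 0))
              * ∫ X, g (X j) ∂P a := by rw [e1]; exact tsum_congr e2
      _ = ∑ a, (∑ ys : Fin (n + 1) → E,
            wt S n ξ0 ys * (φτ n ys * if ys (Fin.last n) = a then 1 else 0))
              * (ρ ^ n * Gf a) := by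
          rw [show (fun j : ℕ => ρ ^ (n + j) * ∑ a, (∑ ys : Fin (n + 1) → E,
              wt S n ξ0 ys * (φτ n ys * if ys (Fin.last n) = a then 1 else 0))
                * ∫ X, g (X j) ∂P a)
              = fun j : ℕ => ∑ a, (∑ ys : Fin (n + 1) → E,
                wt S n ξ0 ys * (φτ n ys * if ys (Fin.last n) = a then 1 else 0))
                  * (ρ ^ n * (ρ ^ j * ∫ X, g (X j) ∂P a)) from funext fun j => by
            rw [Finset.mul_sum]
            exact Finset.sum_congr rfl fun a _ => by rw [pow_add]; ring]
          rw [Summable.tsum_finsetSum fun a _ => (((hsum_pk a).mul_left (ρ ^ n)).mul_left _)]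
          refine Finset.sum_congr rfl fun a _ => ?_
          rw [tsum_mul_left, tsum_mul_left, hG a]
      _ ≤ ∑ a, (∑ ys : Fin (n + 1) → E,
            wt S n ξ0 ys * (φτ n ys * if ys (Fin.last n) = a then 1 else 0))
              * (ρ ^ n * MG) := by
          refine Finset.sum_le_sum fun a _ => mul_le_mul_of_nonneg_left ?_ (hc0 a)
          exact mul_le_mul_of_nonneg_left (hGle a) (pow_nonneg hρ0.le n)
      _ = (∫ X, (if τ X = n then (1:ℝ) else 0) ∂P ξ0) * (ρ ^ n * MG) := by
          rw [← Finset.sum_mul, hqe]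
      _ = (∫ X, (if τ X = n then (1:ℝ) else 0) * ρ ^ n ∂P ξ0) * MG := by
          rw [integral_mul_const]
          ring
  -- splitting the integral
  have hsplit : Gf ξ0 = ∑ n ∈ Finset.range (N + 1),
      ((∫ X, (if τ X = n then (1:ℝ) else 0) * ∑ k ∈ Finset.range n, ρ ^ k * g (X k) ∂P ξ0)
        + ∫ X, (if τ X = n then (1:ℝ) else 0) * ∑' j : ℕ, ρ ^ (n + j) * g (X (n + j)) ∂P ξ0) := by
    show (∫ X, ∑' k : ℕ, ρ ^ k * g (X k) ∂P ξ0) = _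
    rw [show (fun X : ℕ → E => ∑' k : ℕ, ρ ^ k * g (X k))
        = fun X : ℕ → E => ∑ n ∈ Finset.range (N + 1),
          ((if τ X = n then (1:ℝ) else 0) * ∑ k ∈ Finset.range n, ρ ^ k * g (X k)
            + (if τ X = n then (1:ℝ) else 0) * ∑' j : ℕ, ρ ^ (n + j) * g (X (n + j))) from
      funext hdecomp]
    rw [integral_finset_sum (Finset.range (N + 1))
      (f := fun n => fun X : ℕ → E =>
        ((if τ X = n then (1:ℝ) else 0) * ∑ k ∈ Finset.range n, ρ ^ k * g (X k)
          + (if τ X = n then (1:ℝ) else 0) * ∑' j : ℕ, ρ ^ (n + j) * g (X (n + j))))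
      (fun n _ => (hintA n).add (hintB n))]
    exact Finset.sum_congr rfl fun n _ => integral_add (hintA n) (hintB n)
  -- the A part
  have hApart : (∑ n ∈ Finset.range (N + 1),
      ∫ X, (if τ X = n then (1:ℝ) else 0) * ∑ k ∈ Finset.range n, ρ ^ k * g (X k) ∂P ξ0)
        ≤ Ff ξ0 := by
    have step1 : ∀ n : ℕ,
        (∫ X, (if τ X = n then (1:ℝ) else 0) * ∑ k ∈ Finset.range n, ρ ^ k * g (X k) ∂P ξ0)
          ≤ ∫ X, (if τ X = n then (1:ℝ) else 0) * ∑ k ∈ Finset.range n, g (X k) ∂P ξ0 := by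
      intro n
      refine integral_mono (hintA n) (hintA' n) fun X => ?_
      refine mul_le_mul_of_nonneg_left (Finset.sum_le_sum fun k _ => ?_) (hind0 n X)
      calc ρ ^ k * g (X k) ≤ 1 * g (X k) :=
            mul_le_mul_of_nonneg_right (pow_le_one₀ hρ0.le hρ1.le) (hg _)
        _ = g (X k) := one_mul _
    calc (∑ n ∈ Finset.range (N + 1),
        ∫ X, (if τ X = n then (1:ℝ) else 0) * ∑ k ∈ Finset.range n, ρ ^ k * g (X k) ∂P ξ0)
        ≤ ∑ n ∈ Finset.range (N + 1),
            ∫ X, (if τ X = n then (1:ℝ) else 0) * ∑ k ∈ Finset.range n, g (X k) ∂P ξ0 :=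
          Finset.sum_le_sum fun n _ => step1 n
      _ = ∫ X, ∑ n ∈ Finset.range (N + 1),
            (if τ X = n then (1:ℝ) else 0) * ∑ k ∈ Finset.range n, g (X k) ∂P ξ0 :=
          (integral_finset_sum _ fun n _ => hintA' n).symm
      _ = Ff ξ0 := by
          show _ = ∫ X, ∑ k ∈ Finset.range (τ X), g (X k) ∂P ξ0
          congr 1
          funext X
          rw [Finset.sum_eq_single (τ X)
            (fun b _ hb => by rw [if_neg fun h => hb h.symm]; ring)
            (fun h => absurd (Finset.mem_range.mpr (Nat.lt_succ_of_le (hN X))) h)]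
          rw [if_pos rfl, one_mul]
      _ ≤ Ff ξ0 := le_refl _
  have hFle : Ff ξ0 ≤ MF := Finset.le_sup' Ff (Finset.mem_univ ξ0)
  -- the B part
  have hBpart : (∑ n ∈ Finset.range (N + 1),
      ∫ X, (if τ X = n then (1:ℝ) else 0) * ∑' j : ℕ, ρ ^ (n + j) * g (X (n + j)) ∂P ξ0)
        ≤ (1 / 2) * MG := by
    have hintC : ∀ n : ℕ, Integrable
        (fun X => (if τ X = n then (1:ℝ) else 0) * ρ ^ n) (P ξ0) := by
      intro n
      refine hintb ξ0 _ (1 * 1) ((hmind n).mul_const _) fun X => ?_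
      rw [abs_mul]
      refine mul_le_mul (hind01 n X) ?_ (abs_nonneg _) one_pos.le
      rw [abs_of_nonneg (pow_nonneg hρ0.le n)]
      exact pow_le_one₀ hρ0.le hρ1.le
    calc (∑ n ∈ Finset.range (N + 1),
        ∫ X, (if τ X = n then (1:ℝ) else 0) * ∑' j : ℕ, ρ ^ (n + j) * g (X (n + j)) ∂P ξ0)
        ≤ ∑ n ∈ Finset.range (N + 1),
            (∫ X, (if τ X = n then (1:ℝ) else 0) * ρ ^ n ∂P ξ0) * MG :=
          Finset.sum_le_sum fun n _ => core n
      _ = (∑ n ∈ Finset.range (N + 1),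
            ∫ X, (if τ X = n then (1:ℝ) else 0) * ρ ^ n ∂P ξ0) * MG :=
          (Finset.sum_mul _ _ _).symm
      _ = (∫ X, ρ ^ τ X ∂P ξ0) * MG := by
          congr 1
          rw [← integral_finset_sum _ fun n _ => hintC n]
          congr 1
          funext X
          rw [Finset.sum_eq_single (τ X)
            (fun b _ hb => by rw [if_neg fun h => hb h.symm]; ring)
            (fun h => absurd (Finset.mem_range.mpr (Nat.lt_succ_of_le (hN X))) h)]
          rw [if_pos rfl, one_mul]
      _ ≤ (1 / 2) * MG := mul_le_mul_of_nonneg_right (hhalf ξ0) hMG0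
  have final : MG ≤ MF + (1 / 2) * MG := by
    calc MG = Gf ξ0 := hMGeq
      _ = (∑ n ∈ Finset.range (N + 1),
            ∫ X, (if τ X = n then (1:ℝ) else 0) * ∑ k ∈ Finset.range n, ρ ^ k * g (X k) ∂P ξ0)
          + ∑ n ∈ Finset.range (N + 1),
            ∫ X, (if τ X = n then (1:ℝ) else 0) * ∑' j : ℕ, ρ ^ (n + j) * g (X (n + j)) ∂P ξ0 := by
          rw [hsplit, Finset.sum_add_distrib]
      _ ≤ Ff ξ0 + (1 / 2) * MG := add_le_add hApart hBpart
      _ ≤ MF + (1 / 2) * MG := add_le_add_left hFle _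
  exact ⟨first, by linarith⟩

end ResolventBound
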